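/- Let v : ℝ≥0 → ℝ be C¹ with v'(ρ) < 0 for ρ > 0, and let R > 0. Suppose x₁ < x₂ < ... < x_{n-1} solve the follow-the-leader ODE system ẋᵢ(t) = v(ℓ/(x_{i+1}(t) − xᵢ(t))) for i = 1,...,n−2 and ẋ_{n-1}(t) = v(0), with initial gaps satisfying x_{i+1}(0) − xᵢ(0) ≥ ℓ/R for all i. Then for all t ≥ 0 and all i ∈ {1,...,n−2}, x_{i+1}(t) − xᵢ(t) ≥ ℓ/R (discrete maximum principle). -/
import Mathlib

/-- Barrier lemma: if `f 0 ≥ c` and `f' t ≥ 0` whenever `f t ≤ c` (for `t ≥ 0`),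
then `f t ≥ c` for all `t ≥ 0`. -/
lemma ftl_barrier (f f' : ℝ → ℝ) (c : ℝ)
    (hf : ∀ t ≥ (0:ℝ), HasDerivAt f (f' t) t)
    (h0 : f 0 ≥ c)
    (hpos : ∀ t ≥ (0:ℝ), f t ≤ c → 0 ≤ f' t) :
    ∀ t ≥ (0:ℝ), f t ≥ c := by
  intro t0 ht0
  by_contra hlt
  push_neg at hlt
  have hcont : ContinuousOn f (Set.Icc 0 t0) := fun s hs =>
    ((hf s hs.1).continuousAt).continuousWithinAt
  set S : Set ℝ := Set.Icc 0 t0 ∩ f ⁻¹' Set.Ici c with hS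
  have hSclosed : IsClosed S :=
    hcont.preimage_isClosed_of_isClosed isClosed_Icc isClosed_Ici
  have hScpt : IsCompact S :=
    isCompact_Icc.of_isClosed_subset hSclosed Set.inter_subset_left
  have h0S : (0:ℝ) ∈ S := ⟨⟨le_refl 0, ht0⟩, h0⟩
  have hSne : S.Nonempty := ⟨0, h0S⟩
  have hsS : sSup S ∈ S := hScpt.sSup_mem hSne
  have hs0 : (0:ℝ) ≤ sSup S := hsS.1.1
  have hst0 : sSup S ≤ t0 := hsS.1.2
  have hcfs : c ≤ f (sSup S) := hsS.2
  have hst0' : sSup S < t0 := lt_of_le_of_ne hst0 (by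
    intro h
    rw [h] at hcfs
    linarith)
  -- f is monotone on [sSup S, t0]
  have hmono : MonotoneOn f (Set.Icc (sSup S) t0) := by
    apply monotoneOn_of_deriv_nonneg (convex_Icc (sSup S) t0)
    · exact hcont.mono (Set.Icc_subset_Icc_left hs0)
    · intro u hu
      rw [interior_Icc] at hu
      exact ((hf u (hs0.trans hu.1.le)).differentiableAt).differentiableWithinAt
    · intro u hu
      rw [interior_Icc] at hu
      have hu0 : (0:ℝ) ≤ u := hs0.trans hu.1.le
      have hfu : f u ≤ c := by
        by_contra hgt
        push_neg at hgt
        have huS : u ∈ S := ⟨⟨hu0, hu.2.le⟩, hgt.le⟩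
        exact absurd (le_csSup hScpt.bddAbove huS) (not_le.mpr hu.1)
      rw [(hf u hu0).deriv]
      exact hpos u hu0 hfu
  have : f (sSup S) ≤ f t0 :=
    hmono ⟨le_refl _, hst0⟩ ⟨hst0, le_refl t0⟩ hst0
  linarith

/-- Discrete maximum principle for the follow-the-leader system. -/
theorem ftl_discrete_maximum_principle
    (v : ℝ → ℝ) (hv : ContDiffOn ℝ 1 v (Set.Ici 0))
    (hv' : ∀ ρ : ℝ, 0 < ρ → deriv v ρ < 0)
    (R ℓ : ℝ) (hR : 0 < R) (hℓ : 0 < ℓ)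
    (n : ℕ) (hn : 3 ≤ n)
    (x : ℕ → ℝ → ℝ)
    (horder : ∀ t ≥ (0:ℝ), ∀ i, 1 ≤ i → i ≤ n - 2 → x i t < x (i+1) t)
    (hode : ∀ t ≥ (0:ℝ), ∀ i, 1 ≤ i → i ≤ n - 2 →
      HasDerivAt (x i) (v (ℓ / (x (i+1) t - x i t))) t)
    (hlead : ∀ t ≥ (0:ℝ), HasDerivAt (x (n-1)) (v 0) t)
    (hinit : ∀ i, 1 ≤ i → i ≤ n - 2 → x (i+1) 0 - x i 0 ≥ ℓ / R) :
    ∀ t ≥ (0:ℝ), ∀ i, 1 ≤ i → i ≤ n - 2 → x (i+1) t - x i t ≥ ℓ / R := by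
  -- v is antitone on [0, ∞)
  have hanti : AntitoneOn v (Set.Ici 0) := by
    have := strictAntiOn_of_deriv_neg (convex_Ici 0) hv.continuousOn
      (fun ρ hρ => hv' ρ (by rwa [interior_Ici, Set.mem_Ioi] at hρ))
    exact this.antitoneOn
  -- downward induction on the index
  have key : ∀ d : ℕ, ∀ i : ℕ, i + d + 2 = n → 1 ≤ i →
      ∀ t ≥ (0:ℝ), x (i+1) t - x i t ≥ ℓ / R := by
    intro d
    induction d with
    | zero =>
      intro i hi h1
      have hi2 : i ≤ n - 2 := by omega
      have hi1 : i + 1 = n - 1 := by omega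
      apply ftl_barrier (fun t => x (i+1) t - x i t)
        (fun t => v 0 - v (ℓ / (x (i+1) t - x i t))) (ℓ / R)
      · intro t ht
        have hd1 : HasDerivAt (x (i+1)) (v 0) t := by rw [hi1]; exact hlead t ht
        exact hd1.sub (hode t ht i h1 hi2)
      · exact hinit i h1 hi2
      · intro t ht _
        have hgap : 0 < x (i+1) t - x i t := sub_pos.mpr (horder t ht i h1 hi2)
        have hρ : 0 ≤ ℓ / (x (i+1) t - x i t) := le_of_lt (div_pos hℓ hgap)
        have := hanti (Set.self_mem_Ici) hρ hρ
        linarith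
    | succ d ih =>
      intro i hi h1
      have hi2 : i ≤ n - 2 := by omega
      have hi12 : i + 1 ≤ n - 2 := by omega
      have hIH : ∀ t ≥ (0:ℝ), x (i+2) t - x (i+1) t ≥ ℓ / R :=
        ih (i+1) (by omega) (by omega)
      apply ftl_barrier (fun t => x (i+1) t - x i t)
        (fun t => v (ℓ / (x (i+2) t - x (i+1) t)) - v (ℓ / (x (i+1) t - x i t))) (ℓ / R)
      · intro t ht
        exact (hode t ht (i+1) (by omega) hi12).sub (hode t ht i h1 hi2)
      · exact hinit i h1 hi2
      · intro t ht hle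
        have hgap : 0 < x (i+1) t - x i t := sub_pos.mpr (horder t ht i h1 hi2)
        have hgap2 : 0 < x (i+2) t - x (i+1) t := sub_pos.mpr (horder t ht (i+1) (by omega) hi12)
        set a := ℓ / (x (i+2) t - x (i+1) t) with ha
        set b := ℓ / (x (i+1) t - x i t) with hb
        have ha0 : 0 ≤ a := le_of_lt (div_pos hℓ hgap2)
        have hb0 : 0 ≤ b := le_of_lt (div_pos hℓ hgap)
        have haR : a ≤ R := by
          rw [ha, div_le_iff₀ hgap2]
          have := hIH t ht
          calc ℓ = R * (ℓ / R) := by field_simp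
          _ ≤ R * (x (i+2) t - x (i+1) t) := by
              apply mul_le_mul_of_nonneg_left this (le_of_lt hR)
        have hRb : R ≤ b := by
          rw [hb, le_div_iff₀ hgap]
          calc R * (x (i+1) t - x i t) ≤ R * (ℓ / R) := by
                apply mul_le_mul_of_nonneg_left hle (le_of_lt hR)
          _ = ℓ := by field_simp
        have : v b ≤ v a := hanti ha0 hb0 (haR.trans hRb)
        linarith
  intro t ht i h1 h2
  exact key (n - 2 - i) i (by omega) h1 t ht
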